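/- Let n ≥ 2 and 1 ≤ s ≤ n/2 be integers and K a field. Suppose δ : M_n(K) → M_n(K) satisfies δ(xy) = δ(x)y + xδ(y) for all x, y with rank ≤ s and min(rank x, rank y) ≤ 1. Define B = Σ_{i=1}^n δ(e_{ii})e_{ii}. Then δ(e_{ii}) = Be_{ii} − e_{ii}B = [B, e_{ii}] for every i. -/

import Mathlib

open Matrix

lemma stdBasisMatrix_eq_diag {n : ℕ} {K : Type*} [Field K] (i : Fin n) :
    single i i (1 : K) = diagonal (Pi.single i 1) := by
  ext a b
  simp [single, diagonal, Pi.single_apply]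
  aesop

lemma rank_E_le_one {n : ℕ} {K : Type*} [Field K] (i : Fin n) :
    (single i i (1 : K)).rank ≤ 1 := by
  classical
  rw [stdBasisMatrix_eq_diag, Matrix.rank_diagonal (Pi.single i 1 : Fin n → K)]
  have hj : ∀ j : {j : Fin n // (Pi.single i 1 : Fin n → K) j ≠ 0}, j.1 = i := by
    rintro ⟨j, hj⟩
    by_contra h
    exact hj (Pi.single_eq_of_ne h 1)
  calc Fintype.card {j : Fin n // (Pi.single i 1 : Fin n → K) j ≠ 0}
      ≤ Fintype.card ({i} : Set (Fin n)) := by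
        apply Fintype.card_le_of_injective (fun j => ⟨j.1, hj j⟩)
        intro a b hab
        exact Subtype.ext (by rw [hj a, hj b])
    _ = 1 := by simp

theorem stmt_8 {n s : ℕ} (K : Type*) [Field K]
    (hn : 2 ≤ n) (hs1 : 1 ≤ s) (hs2 : 2 * s ≤ n)
    (δ : Matrix (Fin n) (Fin n) K → Matrix (Fin n) (Fin n) K)
    (hδ : ∀ x y : Matrix (Fin n) (Fin n) K,
      x.rank ≤ s → y.rank ≤ s → min x.rank y.rank ≤ 1 →
      δ (x * y) = δ x * y + x * δ y)
    (B : Matrix (Fin n) (Fin n) K)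
    (hB : B = ∑ i : Fin n, δ (single i i (1 : K)) * single i i (1 : K)) :
    ∀ i : Fin n,
      δ (single i i (1 : K)) =
        B * single i i (1 : K) - single i i (1 : K) * B := by
  classical
  set E : Fin n → Matrix (Fin n) (Fin n) K := fun i => single i i (1 : K) with hE
  have hrank : ∀ i, (E i).rank ≤ s := fun i => le_trans (rank_E_le_one i) hs1
  have hrank1 : ∀ i, (E i).rank ≤ 1 := fun i => rank_E_le_one i
  have hEE : ∀ i, E i * E i = E i := by
    intro i
    simp [hE, single_mul_single_same]
  have hEEne : ∀ i j, i ≠ j → E i * E j = 0 := by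
    intro i j h
    simp [hE, single_mul_single_of_ne (c := (1 : K)) i i j h]
  have hδ0 : δ 0 = 0 := by
    have h := hδ 0 0 (by simp [Matrix.rank_zero]) (by simp [Matrix.rank_zero])
      (by simp [Matrix.rank_zero])
    simpa using h
  have hLeib : ∀ i, δ (E i) = δ (E i) * E i + E i * δ (E i) := by
    intro i
    have := hδ (E i) (E i) (hrank i) (hrank i) (le_trans (min_le_left _ _) (hrank1 i))
    rwa [hEE i] at this
  have hanti : ∀ i j, i ≠ j → E i * δ (E j) = - (δ (E i) * E j) := by
    intro i j h
    have := hδ (E i) (E j) (hrank i) (hrank j) (le_trans (min_le_left _ _) (hrank1 i))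
    rw [hEEne i j h, hδ0] at this
    exact eq_neg_of_add_eq_zero_right this.symm
  have hmid : ∀ i, E i * δ (E i) * E i = 0 := by
    intro i
    have h := congrArg (· * E i) (hLeib i)
    simp only [add_mul, Matrix.mul_assoc, hEE i] at h
    have h2 : δ (E i) * E i + E i * (δ (E i) * E i) = δ (E i) * E i + 0 := by
      rw [add_zero]; exact h.symm
    rw [Matrix.mul_assoc]
    exact add_left_cancel h2
  intro i
  have hsum : ∑ j : Fin n, E j = 1 := by
    rw [hE]
    ext a b
    rw [Matrix.sum_apply]
    by_cases h : a = b
    · subst h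
      simp [single, Matrix.one_apply]
    · rw [Finset.sum_eq_zero (fun j _ => single_apply_of_ne j j 1 a b
        (fun hc => h (hc.1.symm.trans hc.2))), Matrix.one_apply_ne h]
  have hterm : ∀ j : Fin n,
      δ (E j) * E j * E i - E i * (δ (E j) * E j) = δ (E i) * E j := by
    intro j
    by_cases h : j = i
    · subst h
      rw [Matrix.mul_assoc, hEE j, ← Matrix.mul_assoc, hmid j, sub_zero]
    · rw [Matrix.mul_assoc, hEEne j i h, Matrix.mul_zero, ← Matrix.mul_assoc,
        hanti i j (Ne.symm h), neg_mul, Matrix.mul_assoc, hEE j, zero_sub, neg_neg]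
  calc δ (E i) = δ (E i) * 1 := by rw [Matrix.mul_one]
    _ = ∑ j : Fin n, δ (E i) * E j := by rw [← hsum, Finset.mul_sum]
    _ = ∑ j : Fin n, (δ (E j) * E j * E i - E i * (δ (E j) * E j)) := by
        exact Finset.sum_congr rfl fun j _ => (hterm j).symm
    _ = B * E i - E i * B := by
        rw [hB, Finset.sum_sub_distrib, Finset.sum_mul, Finset.mul_sum]
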